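/- The polynomial P(X) = 552X⁵ - 828X⁴ + 322X³ - 23X² - 1 is irreducible over ℚ. -/

import Mathlib

open Polynomial

private noncomputable def qZ : ℤ[X] := X^5 + C 23 * X^3 - C 322 * X^2 + C 828 * X - C 552

private theorem qZ_monic : qZ.Monic := by unfold qZ; monicity!

private theorem qZ_natDegree : qZ.natDegree = 5 := by unfold qZ; compute_degree!

private theorem qZ_irred : Irreducible qZ := by
  have heis : qZ.IsEisensteinAt (Ideal.span {(23 : ℤ)}) := by
    constructor
    · rw [qZ_monic.leadingCoeff, Ideal.mem_span_singleton]
      decide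
    · intro n hn
      rw [qZ_natDegree] at hn
      rw [Ideal.mem_span_singleton]
      interval_cases n <;> unfold qZ <;> simp [coeff_X, coeff_one, coeff_X_pow] <;> decide
    · rw [Ideal.span_singleton_pow, Ideal.mem_span_singleton]
      unfold qZ
      simp
  exact heis.irreducible (Ideal.span_singleton_prime (by norm_num) |>.mpr (by norm_num))
    qZ_monic.isPrimitive (by rw [qZ_natDegree]; norm_num)

private noncomputable def qQ : ℚ[X] := X^5 + C 23 * X^3 - C 322 * X^2 + C 828 * X - C 552

private theorem qQ_irred : Irreducible qQ := by
  have : qQ = qZ.map (Int.castRingHom ℚ) := by unfold qQ qZ; simp [map_ofNat]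
  rw [this, ← Polynomial.IsPrimitive.Int.irreducible_iff_irreducible_map_cast qZ_monic.isPrimitive]
  exact qZ_irred

private theorem mirror_irred {p : ℚ[X]} (hp : Irreducible p) : Irreducible p.mirror := by
  have key : ∀ q : ℚ[X], IsUnit q.mirror → IsUnit q := by
    intro q hq
    obtain ⟨r, hr, hrq⟩ := Polynomial.isUnit_iff.mp hq
    have : q = C r := by rw [← q.mirror_mirror, ← hrq, mirror_C]
    rw [this]
    exact isUnit_C.mpr hr
  constructor
  · intro h
    exact hp.not_isUnit (key p h)
  · intro a b hab
    have h : p = a.mirror * b.mirror := by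
      rw [← mirror_mul_of_domain, ← hab, mirror_mirror]
    rcases hp.isUnit_or_isUnit h with h' | h'
    · exact Or.inl (key a h')
    · exact Or.inr (key b h')

open Polynomial in
/-- The polynomial `552X⁵ - 828X⁴ + 322X³ - 23X² - 1` is irreducible over `ℚ`. -/
theorem stmt_13 :
    Irreducible (552 * X^5 - 828 * X^4 + 322 * X^3 - 23 * X^2 - 1 : ℚ[X]) := by
  have hd : qQ.natDegree = 5 := by unfold qQ; compute_degree!
  have ht : qQ.natTrailingDegree = 0 := by
    rw [natTrailingDegree_eq_zero]
    right
    unfold qQ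
    simp
  have hmir : (552 * X^5 - 828 * X^4 + 322 * X^3 - 23 * X^2 - 1 : ℚ[X]) = -qQ.mirror := by
    have hG : (552 * X^5 - 828 * X^4 + 322 * X^3 - 23 * X^2 - 1 : ℚ[X]).natDegree = 5 := by
      compute_degree!
    ext n
    rw [coeff_neg, coeff_mirror, hd, ht, add_zero]
    rcases le_or_gt n 5 with hn | hn
    · interval_cases n <;>
        simp [revAt_le, qQ, coeff_X, coeff_one, coeff_X_pow, coeff_C]
    · rw [revAt_eq_self_of_lt hn] -- guess name
      rw [coeff_eq_zero_of_natDegree_lt (by rw [hG]; exact hn),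
        coeff_eq_zero_of_natDegree_lt (by rw [hd]; exact hn), neg_zero]
  rw [hmir]
  have := mirror_irred qQ_irred
  have hu : Associated qQ.mirror (-qQ.mirror) := ⟨-1, by simp⟩
  exact hu.irreducible this
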